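/- arXiv:2209.09419 — 2 statements merged into one kernel-verified Lean document; each statement's English description precedes it below -/
import Mathlib

section
/- (Bounded Termination) Any admissible path s_{0:T} achieving the optimal value V(s_0,T) enters its terminal nodes in at most |S| − 1 steps; i.e., its terminal step K satisfies K ≤ |S| − 1, so μ_{s_t} = μ_{s_T} for all t ∈ [|S|−1, T]. Moreover, the nodes s_0, s_1, ..., s_K up to the terminal step are pairwise distinct. -/
open Finset
open scoped ENNReal

/-- A path `p` is admissible up to time `T` if consecutive nodes are adjacent. -/
def Adm {S : Type*} (adj : S → S → Prop) (p : ℕ → S) (T : ℕ) : Prop :=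
  ∀ t < T, adj (p t) (p (t + 1))

/-- Cumulative expected reward of the path `p 0, p 1, ..., p T`. -/
noncomputable def Vpath {S : Type*} (μ : S → ℝ) (p : ℕ → S) (T : ℕ) : ℝ :=
  ∑ t ∈ Finset.range (T + 1), μ (p t)

/-- Optimal `T`-step cumulative expected reward starting from node `s`. -/
noncomputable def Vopt {S : Type*} (adj : S → S → Prop) (μ : S → ℝ) (s : S) (T : ℕ) : ℝ :=
  sSup {v | ∃ p : ℕ → S, p 0 = s ∧ Adm adj p T ∧ Vpath μ p T = v}

/-- Infinite-horizon undiscounted regret (total cost) of a stationary policy `π`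
starting from node `s`, as a limit (`tsum` of the nonnegative costs). -/
noncomputable def Rinf {S : Type*} (μ : S → ℝ) (μstar : ℝ) (π : S → S) (s : S) : ℝ≥0∞ :=
  ∑' t : ℕ, ENNReal.ofReal (μstar - μ (π^[t] s))

/-- The sufficient planning horizon `T_G = ⌈D μ* / Δ⌉`. -/
noncomputable def TG (D : ℕ) (μstar Δ : ℝ) : ℕ :=
  Nat.ceil ((D : ℝ) * μstar / Δ)

/- ### Auxiliary lemmas -/

private lemma sum_split' (f : ℕ → ℝ) {a b : ℕ} (h : a ≤ b) :
    ∑ i ∈ range b, f i = ∑ i ∈ range a, f i + ∑ i ∈ Ico a b, f i := by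
  rw [range_eq_Ico, ← Finset.sum_Ico_consecutive f (Nat.zero_le a) h, ← range_eq_Ico]

private lemma sum_split (f : ℕ → ℝ) {t T : ℕ} (ht : t ≤ T) :
    ∑ i ∈ range (T + 1), f i
      = ∑ i ∈ range (t + 1), f i + ∑ i ∈ Ico (t + 1) (T + 1), f i :=
  sum_split' f (by omega)

private lemma const_Ico_sum (c : ℝ) (a b : ℕ) :
    ∑ _i ∈ Ico a b, c = ((b - a : ℕ) : ℝ) * c := by
  rw [Finset.sum_const, Nat.card_Ico, nsmul_eq_mul]

/-- Every admissible path value is at most `Vopt`. -/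
private lemma le_vopt {S : Type*} [Fintype S] [Nonempty S] (adj : S → S → Prop)
    (μ : S → ℝ) (s0 : S) (T : ℕ) (q : ℕ → S) (hq0 : q 0 = s0) (hqadm : Adm adj q T) :
    Vpath μ q T ≤ Vopt adj μ s0 T := by
  apply le_csSup
  · refine ⟨((T + 1 : ℕ) : ℝ) * (univ.sup' univ_nonempty μ), ?_⟩
    rintro v ⟨r, -, -, rfl⟩
    calc Vpath μ r T ≤ ∑ _t ∈ range (T + 1), univ.sup' univ_nonempty μ :=
          Finset.sum_le_sum fun i _ => Finset.le_sup' μ (mem_univ _)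
      _ = _ := by rw [Finset.sum_const, card_range, nsmul_eq_mul]
  · exact ⟨q, hq0, hqadm, rfl⟩

/-- The "stay at `p t` forever" path is admissible. -/
private lemma stay_adm {S : Type*} {adj : S → S → Prop} (hrefl : ∀ s, adj s s)
    {p : ℕ → S} {T : ℕ} (hadm : Adm adj p T) (t : ℕ) :
    Adm adj (fun i => p (min i t)) T := by
  intro i hi
  rcases lt_or_ge i t with h | h
  · have h1 : min i t = i := min_eq_left h.le
    have h2 : min (i + 1) t = i + 1 := min_eq_left h
    simp only [h1, h2]
    exact hadm i hi
  · have h1 : min i t = t := min_eq_right h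
    have h2 : min (i + 1) t = t := min_eq_right (h.trans (Nat.le_succ i))
    simp only [h1, h2]
    exact hrefl _

/-- Value of the "stay at `p t`" path. -/
private lemma stay_val {S : Type*} (μ : S → ℝ) (p : ℕ → S) {t T : ℕ} (ht : t ≤ T) :
    Vpath μ (fun i => p (min i t)) T
      = ∑ i ∈ range (t + 1), μ (p i) + ((T - t : ℕ) : ℝ) * μ (p t) := by
  unfold Vpath
  rw [sum_split _ ht]
  congr 1
  · refine Finset.sum_congr rfl fun i hi => ?_
    show μ (p (min i t)) = μ (p i)
    rw [min_eq_left (by have := mem_range.mp hi; omega)]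
  · rw [Finset.sum_congr rfl (fun i hi => ?_), const_Ico_sum, show T + 1 - (t + 1) = T - t by omega]
    have hi' := Finset.mem_Ico.mp hi
    show μ (p (min i t)) = μ (p t)
    rw [min_eq_right (by omega)]

/-- On an optimal path, the terminal node has the largest mean. -/
private lemma max_at_end {S : Type*} [Fintype S] [Nonempty S]
    {adj : S → S → Prop} (hrefl : ∀ s, adj s s) {μ : S → ℝ} {T : ℕ} {s0 : S} {p : ℕ → S}
    (hp0 : p 0 = s0) (hadm : Adm adj p T) (hopt : Vpath μ p T = Vopt adj μ s0 T) :
    ∀ t ≤ T, μ (p t) ≤ μ (p T) := by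
  haveI : DecidablePred (fun u => ∀ i ∈ range (T + 1), μ (p i) ≤ μ (p u)) :=
    Classical.decPred _
  obtain ⟨u, hu, humax⟩ :=
    Finset.exists_max_image (range (T + 1)) (fun i => μ (p i)) ⟨0, by simp⟩
  let C : Finset ℕ := (range (T + 1)).filter
      (fun u => ∀ i ∈ range (T + 1), μ (p i) ≤ μ (p u))
  have hCne : C.Nonempty := ⟨u, mem_filter.mpr ⟨hu, humax⟩⟩
  set t0 := C.max' hCne with ht0
  obtain ⟨ht0mem, ht0max⟩ := mem_filter.mp (C.max'_mem hCne)
  rw [← ht0] at ht0mem ht0max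
  rw [mem_range] at ht0mem
  have ht0T : t0 ≤ T := by omega
  have hstrict : ∀ i, t0 < i → i ≤ T → μ (p i) < μ (p t0) := by
    intro i hi hiT
    rcases lt_or_eq_of_le (ht0max i (mem_range.mpr (by omega))) with h | h
    · exact h
    · exfalso
      have hiC : i ∈ C :=
        mem_filter.mpr ⟨mem_range.mpr (by omega), fun j hj => (ht0max j hj).trans h.ge⟩
      have := Finset.le_max' C i hiC
      omega
  have ht0eq : t0 = T := by
    by_contra hne
    have hlt : t0 < T := lt_of_le_of_ne ht0T hne
    have hq := le_vopt adj μ s0 T (fun i => p (min i t0))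
      (by simpa using hp0) (stay_adm hrefl hadm t0)
    rw [stay_val μ p ht0T, ← hopt] at hq
    unfold Vpath at hq
    rw [sum_split _ ht0T] at hq
    have hlt2 : ∑ i ∈ Ico (t0 + 1) (T + 1), μ (p i) < ((T - t0 : ℕ) : ℝ) * μ (p t0) := by
      calc ∑ i ∈ Ico (t0 + 1) (T + 1), μ (p i)
          < ∑ _i ∈ Ico (t0 + 1) (T + 1), μ (p t0) := by
            apply Finset.sum_lt_sum_of_nonempty
            · rw [Finset.nonempty_Ico]; omega
            · intro i hi
              have hi' := Finset.mem_Ico.mp hi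
              exact hstrict i (by omega) (by omega)
        _ = _ := by rw [const_Ico_sum, show T + 1 - (t0 + 1) = T - t0 by omega]
    linarith
  intro t htT
  have := ht0max t (mem_range.mpr (by omega))
  rwa [ht0eq] at this

/-- Strictly before the terminal step `K`, means are strictly below the terminal mean. -/
private lemma strict_before_K {S : Type*} [Fintype S] [Nonempty S]
    {adj : S → S → Prop} (hrefl : ∀ s, adj s s) {μ : S → ℝ} {T : ℕ} {s0 : S} {p : ℕ → S}
    (hp0 : p 0 = s0) (hadm : Adm adj p T) (hopt : Vpath μ p T = Vopt adj μ s0 T)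
    {K : ℕ} (hKT : K ≤ T)
    (hKmin : ∀ k < K, ¬ (∀ t, k ≤ t → t ≤ T → μ (p t) = μ (p k))) :
    ∀ t < K, μ (p t) < μ (p T) := by
  intro t htK
  have htT : t ≤ T := le_trans htK.le hKT
  have hA := max_at_end hrefl hp0 hadm hopt
  rcases lt_or_eq_of_le (hA t htT) with h | h
  · exact h
  exfalso
  have hq := le_vopt adj μ s0 T (fun i => p (min i t))
    (by simpa using hp0) (stay_adm hrefl hadm t)
  rw [stay_val μ p htT, ← hopt] at hq
  unfold Vpath at hq
  rw [sum_split _ htT] at hq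
  have hle : ∀ i ∈ Ico (t + 1) (T + 1), μ (p i) ≤ μ (p t) := by
    intro i hi
    have hi' := Finset.mem_Ico.mp hi
    rw [h]; exact hA i (by omega)
  have h1 : ∑ _i ∈ Ico (t + 1) (T + 1), μ (p t) = ((T - t : ℕ) : ℝ) * μ (p t) := by
    rw [const_Ico_sum, show T + 1 - (t + 1) = T - t by omega]
  have h2 : ∑ i ∈ Ico (t + 1) (T + 1), μ (p i) ≤ ∑ _i ∈ Ico (t + 1) (T + 1), μ (p t) :=
    Finset.sum_le_sum hle
  have hsum : ∑ i ∈ Ico (t + 1) (T + 1), μ (p i) = ∑ _i ∈ Ico (t + 1) (T + 1), μ (p t) := by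
    rw [h1]; rw [h1] at h2; linarith
  have hall := (Finset.sum_eq_sum_iff_of_le hle).mp hsum
  refine hKmin t htK (fun i hti hiT => ?_)
  rcases eq_or_lt_of_le hti with rfl | hlt
  · rfl
  · exact hall i (Finset.mem_Ico.mpr ⟨by omega, by omega⟩)

/-- Bounded Termination: any optimal path enters its terminal nodes within
`|S| - 1` steps, and the nodes up to the terminal step are pairwise distinct. -/
theorem bounded_termination {S : Type*} [Fintype S] [Nonempty S]
    (adj : S → S → Prop) (hrefl : ∀ s, adj s s) (hsymm : ∀ s t, adj s t → adj t s)
    (μ : S → ℝ) (T : ℕ) (s0 : S) (p : ℕ → S)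
    (hp0 : p 0 = s0) (hadm : Adm adj p T)
    (hopt : Vpath μ p T = Vopt adj μ s0 T)
    (K : ℕ) (hKT : K ≤ T)
    (hKterm : ∀ t, K ≤ t → t ≤ T → μ (p t) = μ (p K))
    (hKmin : ∀ k < K, ¬ (∀ t, k ≤ t → t ≤ T → μ (p t) = μ (p k))) :
    K ≤ Fintype.card S - 1 ∧
    (∀ t, Fintype.card S - 1 ≤ t → t ≤ T → μ (p t) = μ (p T)) ∧
    (∀ l h : ℕ, l < h → h ≤ K → p l ≠ p h) := by
  have hstrict := strict_before_K hrefl hp0 hadm hopt hKT hKmin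
  have hμT : μ (p T) = μ (p K) := hKterm T hKT le_rfl
  -- pairwise distinctness up to K
  have hdist : ∀ l h : ℕ, l < h → h ≤ K → p l ≠ p h := by
    intro l h hlh hhK heq
    have hlK : l < K := lt_of_lt_of_le hlh hhK
    rcases eq_or_lt_of_le hhK with rfl | hhK'
    · -- h = K : μ (p l) = μ (p K) = μ (p T), but μ (p l) < μ (p T)
      have h1 := hstrict l hlK
      rw [heq, ← hμT] at h1
      exact lt_irrefl _ h1
    · -- h < K : shortcut path is strictly better
      set d := h - l with hd
      have hdpos : 1 ≤ d := by omega
      have hhT : h < T := lt_of_lt_of_le hhK' hKT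
      set q : ℕ → S := fun i => if i ≤ l then p i else p (min (i + d) T) with hqdef
      have hq0 : q 0 = s0 := by
        rw [hqdef]; simp only [Nat.zero_le, if_pos]; exact hp0
      have hqadm : Adm adj q T := by
        intro i hi
        rcases lt_trichotomy i l with h1 | h1 | h1
        · have h2 : i + 1 ≤ l := h1
          simp only [hqdef, if_pos h1.le, if_pos h2]
          exact hadm i hi
        · subst h1
          have hnot : ¬ (i + 1 ≤ i) := by omega
          simp only [hqdef, if_pos le_rfl, if_neg hnot]
          rw [min_eq_left (by omega : i + 1 + d ≤ T), show i + 1 + d = h + 1 by omega, heq]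
          exact hadm h (by omega)
        · have hn1 : ¬ (i ≤ l) := by omega
          have hn2 : ¬ (i + 1 ≤ l) := by omega
          simp only [hqdef, if_neg hn1, if_neg hn2]
          rcases lt_or_ge (i + d) T with h2 | h2
          · rw [min_eq_left h2.le, min_eq_left (by omega : i + 1 + d ≤ T),
              show i + 1 + d = (i + d) + 1 by omega]
            exact hadm (i + d) h2
          · rw [min_eq_right h2, min_eq_right (by omega : T ≤ i + 1 + d)]
            exact hrefl _
      -- value of the shortcut path
      have hval : Vpath μ q T
          = ∑ i ∈ range (l + 1), μ (p i)
            + (∑ i ∈ Ico (h + 1) (T + 1), μ (p i) + ((d : ℕ) : ℝ) * μ (p T)) := by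
        unfold Vpath
        rw [sum_split _ (show l ≤ T by omega)]
        congr 1
        · refine Finset.sum_congr rfl fun i hi => ?_
          have hi' := mem_range.mp hi
          rw [hqdef]; simp only [if_pos (show i ≤ l by omega)]
        · have e1 : ∀ i ∈ Ico (l + 1) (T + 1), μ (q i) = μ (p (min (i + d) T)) := by
            intro i hi
            have hi' := mem_Ico.mp hi
            rw [hqdef]; simp only [if_neg (show ¬ i ≤ l by omega)]
          rw [Finset.sum_congr rfl e1, Finset.sum_Ico_eq_sum_range,
            show T + 1 - (l + 1) = (T - h) + d by omega,
            sum_split' _ (show T - h ≤ (T - h) + d by omega)]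
          congr 1
          · rw [Finset.sum_Ico_eq_sum_range, show T + 1 - (h + 1) = T - h by omega]
            refine Finset.sum_congr rfl fun i hi => ?_
            have hi' := mem_range.mp hi
            rw [min_eq_left (by omega : l + 1 + i + d ≤ T),
              show l + 1 + i + d = h + 1 + i by omega]
          · rw [Finset.sum_congr rfl (fun i hi => ?_), const_Ico_sum,
              show (T - h) + d - (T - h) = d by omega]
            have hi' := mem_Ico.mp hi
            rw [min_eq_right (by omega : T ≤ l + 1 + i + d)]
      -- the original value, split at l and h
      have hsplit : Vpath μ p T
          = ∑ i ∈ range (l + 1), μ (p i)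
            + (∑ i ∈ Ico (l + 1) (h + 1), μ (p i) + ∑ i ∈ Ico (h + 1) (T + 1), μ (p i)) := by
        unfold Vpath
        rw [sum_split _ (show l ≤ T by omega),
          ← Finset.sum_Ico_consecutive (fun i => μ (p i))
            (show l + 1 ≤ h + 1 by omega) (show h + 1 ≤ T + 1 by omega)]
      -- the skipped loop is strictly worse than staying at the terminal node
      have hloop : ∑ i ∈ Ico (l + 1) (h + 1), μ (p i) < ((d : ℕ) : ℝ) * μ (p T) := by
        calc ∑ i ∈ Ico (l + 1) (h + 1), μ (p i)
            < ∑ _i ∈ Ico (l + 1) (h + 1), μ (p T) := by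
              apply Finset.sum_lt_sum_of_nonempty
              · rw [Finset.nonempty_Ico]; omega
              · intro i hi
                have hi' := Finset.mem_Ico.mp hi
                exact hstrict i (by omega)
          _ = _ := by rw [const_Ico_sum, show h + 1 - (l + 1) = d by omega]
      have hq := le_vopt adj μ s0 T q hq0 hqadm
      rw [hval, ← hopt, hsplit] at hq
      linarith
  -- pigeonhole : K + 1 ≤ |S|
  have hcard : K + 1 ≤ Fintype.card S := by
    have hinj : Function.Injective (fun i : Fin (K + 1) => p i) := by
      intro a b hab
      rcases lt_trichotomy (a : ℕ) (b : ℕ) with h | h | h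
      · exact absurd hab (hdist a b h (Nat.lt_succ_iff.mp b.isLt))
      · exact Fin.ext h
      · exact absurd hab.symm (hdist b a h (Nat.lt_succ_iff.mp a.isLt))
    simpa using Fintype.card_le_of_injective _ hinj
  have hS1 : 1 ≤ Fintype.card S := Fintype.card_pos
  refine ⟨by omega, ?_, hdist⟩
  intro t h1 h2
  rw [hKterm t (by omega) h2, hμT]
end

section
/- (Greedy stationary policy optimality) Let T_G = ⌈Dμ*/Δ⌉ and define π_G(s) ∈ argmax_{w ∈ N_s} V(w, T_G + |S|). Then for any T ≥ T_G + |S| and any start node s_0, every path s_{0:T} generated by s_t ∈ π_G(s_{t-1}) achieves the optimal value V(s_0, T). -/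
open Finset
open scoped ENNReal

section Aux

variable {S : Type*} [Fintype S] [Nonempty S]

/-- Total gap (regret) along the first `n` nodes of a path. -/
noncomputable def Cost (μ : S → ℝ) (μstar : ℝ) (p : ℕ → S) (n : ℕ) : ℝ :=
  ∑ t ∈ Finset.range n, (μstar - μ (p t))

lemma vpath_eq_cost (μ : S → ℝ) (μstar : ℝ) (p : ℕ → S) (T : ℕ) :
    Vpath μ p T = ((T : ℝ) + 1) * μstar - Cost μ μstar p (T + 1) := by
  simp only [Vpath, Cost, Finset.sum_sub_distrib, Finset.sum_const, Finset.card_range,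
    nsmul_eq_mul]
  push_cast
  ring

lemma cost_nonneg (μ : S → ℝ) (μstar : ℝ) (hmax : ∀ s, μ s ≤ μstar) (p : ℕ → S) (n : ℕ) :
    0 ≤ Cost μ μstar p n :=
  Finset.sum_nonneg fun _ _ => sub_nonneg.2 (hmax _)

lemma cost_mono (μ : S → ℝ) (μstar : ℝ) (hmax : ∀ s, μ s ≤ μstar) (p : ℕ → S) {m n : ℕ}
    (hmn : m ≤ n) : Cost μ μstar p m ≤ Cost μ μstar p n :=
  Finset.sum_le_sum_of_subset_of_nonneg (Finset.range_subset_range.2 hmn)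
    fun _ _ _ => sub_nonneg.2 (hmax _)

/-- Follow `p` up to time `k`, then stay at `p k` forever. -/
def stopAt (p : ℕ → S) (k : ℕ) : ℕ → S := fun t => p (min t k)

lemma stopAt_adm {adj : S → S → Prop} (hrefl : ∀ s, adj s s) {p : ℕ → S} {k : ℕ}
    (hadm : Adm adj p k) (T : ℕ) : Adm adj (stopAt p k) T := by
  intro t _
  by_cases h : t < k
  · have h1 : min t k = t := min_eq_left h.le
    have h2 : min (t + 1) k = t + 1 := min_eq_left h
    simp only [stopAt, h1, h2]
    exact hadm t h
  · push_neg at h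
    have h1 : min t k = k := min_eq_right h
    have h2 : min (t + 1) k = k := min_eq_right (h.trans (Nat.le_succ t))
    simp only [stopAt, h1, h2]
    exact hrefl _

lemma cost_stopAt (μ : S → ℝ) (μstar : ℝ) {p : ℕ → S} {k n : ℕ}
    (hopt : μ (p k) = μstar) (hk : k ≤ n) :
    Cost μ μstar (stopAt p k) n = Cost μ μstar p k := by
  unfold Cost
  rw [← Finset.sum_range_add_sum_Ico _ hk]
  have h1 : ∑ t ∈ Finset.range k, (μstar - μ (stopAt p k t))
      = ∑ t ∈ Finset.range k, (μstar - μ (p t)) := by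
    refine Finset.sum_congr rfl fun t ht => ?_
    simp only [stopAt, min_eq_left (Finset.mem_range.1 ht).le]
  have h2 : ∑ t ∈ Finset.Ico k n, (μstar - μ (stopAt p k t)) = 0 := by
    refine Finset.sum_eq_zero fun t ht => ?_
    simp only [stopAt, min_eq_right (Finset.mem_Ico.1 ht).1, hopt, sub_self]
  rw [h1, h2, add_zero]

lemma vpath_le (μ : S → ℝ) (μstar : ℝ) (hmax : ∀ s, μ s ≤ μstar) (p : ℕ → S) (T : ℕ) :
    Vpath μ p T ≤ ((T : ℝ) + 1) * μstar := by
  rw [vpath_eq_cost μ μstar]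
  linarith [cost_nonneg μ μstar hmax p (T + 1)]

lemma vopt_bdd (adj : S → S → Prop) (μ : S → ℝ) (μstar : ℝ) (hmax : ∀ s, μ s ≤ μstar)
    (s : S) (T : ℕ) :
    BddAbove {v | ∃ p : ℕ → S, p 0 = s ∧ Adm adj p T ∧ Vpath μ p T = v} := by
  refine ⟨((T : ℝ) + 1) * μstar, ?_⟩
  rintro v ⟨p, -, -, rfl⟩
  exact vpath_le μ μstar hmax p T

lemma vopt_nonempty (adj : S → S → Prop) (hrefl : ∀ s, adj s s) (μ : S → ℝ) (s : S) (T : ℕ) :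
    ({v | ∃ p : ℕ → S, p 0 = s ∧ Adm adj p T ∧ Vpath μ p T = v}).Nonempty :=
  ⟨_, fun _ => s, rfl, fun _ _ => hrefl s, rfl⟩

lemma le_vopt_s10 (adj : S → S → Prop) (μ : S → ℝ) (μstar : ℝ) (hmax : ∀ s, μ s ≤ μstar)
    {s : S} {T : ℕ} {p : ℕ → S} (hp0 : p 0 = s) (hadm : Adm adj p T) :
    Vpath μ p T ≤ Vopt adj μ s T :=
  le_csSup (vopt_bdd adj μ μstar hmax s T) ⟨p, hp0, hadm, rfl⟩

lemma vopt_le (adj : S → S → Prop) (hrefl : ∀ s, adj s s) (μ : S → ℝ) {s : S} {T : ℕ} {x : ℝ}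
    (hx : ∀ p : ℕ → S, p 0 = s → Adm adj p T → Vpath μ p T ≤ x) :
    Vopt adj μ s T ≤ x := by
  refine csSup_le (vopt_nonempty adj hrefl μ s T) ?_
  rintro v ⟨p, h1, h2, rfl⟩
  exact hx p h1 h2

lemma exists_opt (adj : S → S → Prop) (hrefl : ∀ s, adj s s) (μ : S → ℝ) (s : S) (T : ℕ) :
    ∃ p : ℕ → S, p 0 = s ∧ Adm adj p T ∧ Vpath μ p T = Vopt adj μ s T := by
  have hfin : ({v | ∃ p : ℕ → S, p 0 = s ∧ Adm adj p T ∧ Vpath μ p T = v}).Finite := by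
    refine Set.Finite.subset
      (Set.finite_range fun f : Fin (T + 1) → S => ∑ i : Fin (T + 1), μ (f i)) ?_
    rintro v ⟨p, -, -, rfl⟩
    exact ⟨fun i => p i, Fin.sum_univ_eq_sum_range (fun t => μ (p t)) (T + 1)⟩
  have hmem := (vopt_nonempty adj hrefl μ s T).csSup_mem hfin
  obtain ⟨p, h1, h2, h3⟩ := hmem
  exact ⟨p, h1, h2, h3⟩

/-- The stationary "cost-to-go" function: `(H+1)μ* - V(s, H)` for `H = T_G + |S|`. -/
noncomputable def hfun (adj : S → S → Prop) (μ : S → ℝ) (μstar Δ : ℝ) (D : ℕ) (s : S) : ℝ :=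
  ((TG D μstar Δ + Fintype.card S : ℕ) + 1) * μstar
    - Vopt adj μ s (TG D μstar Δ + Fintype.card S)

variable {adj : S → S → Prop} {μ : S → ℝ} {μstar Δ : ℝ} {D : ℕ}

lemma hfun_le_cost (hmax : ∀ s, μ s ≤ μstar) {s : S} {q : ℕ → S} (hq0 : q 0 = s)
    (hqadm : Adm adj q (TG D μstar Δ + Fintype.card S)) :
    hfun adj μ μstar Δ D s ≤ Cost μ μstar q (TG D μstar Δ + Fintype.card S + 1) := by
  have h1 := le_vopt_s10 adj μ μstar hmax hq0 hqadm
  rw [vpath_eq_cost μ μstar] at h1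
  unfold hfun
  push_cast at h1 ⊢
  linarith

lemma hfun_nonneg (hrefl : ∀ s, adj s s) (hmax : ∀ s, μ s ≤ μstar) (s : S) :
    0 ≤ hfun adj μ μstar Δ D s := by
  have h1 : Vopt adj μ s (TG D μstar Δ + Fintype.card S)
      ≤ ((TG D μstar Δ + Fintype.card S : ℕ) + 1) * μstar :=
    vopt_le adj hrefl μ fun p _ _ => by
      have := vpath_le μ μstar hmax p (TG D μstar Δ + Fintype.card S)
      push_cast at this ⊢; linarith
  unfold hfun; linarith

lemma gap_le_hfun (hrefl : ∀ s, adj s s) (hmax : ∀ s, μ s ≤ μstar) (s : S) :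
    μstar - μ s ≤ hfun adj μ μstar Δ D s := by
  set H := TG D μstar Δ + Fintype.card S with hH
  have h1 : Vopt adj μ s H ≤ μ s + (H : ℝ) * μstar := by
    refine vopt_le adj hrefl μ fun p hp0 _ => ?_
    have hsplit : Vpath μ p H = (∑ t ∈ Finset.range H, μ (p (t + 1))) + μ (p 0) :=
      Finset.sum_range_succ' (fun t => μ (p t)) H
    have h2 : ∑ t ∈ Finset.range H, μ (p (t + 1)) ≤ (H : ℝ) * μstar := by
      calc ∑ t ∈ Finset.range H, μ (p (t + 1)) ≤ ∑ _t ∈ Finset.range H, μstar :=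
            Finset.sum_le_sum fun t _ => hmax _
        _ = (H : ℝ) * μstar := by rw [Finset.sum_const, Finset.card_range, nsmul_eq_mul]
    rw [hsplit, hp0]; linarith
  unfold hfun
  rw [← hH]
  push_cast at h1 ⊢
  linarith

lemma hfun_eq_zero (hrefl : ∀ s, adj s s) (hmax : ∀ s, μ s ≤ μstar) {s : S}
    (hs : μ s = μstar) : hfun adj μ μstar Δ D s = 0 := by
  set H := TG D μstar Δ + Fintype.card S with hH
  have h1 : ((H : ℝ) + 1) * μstar ≤ Vopt adj μ s H := by
    have h2 : Vpath μ (fun _ => s) H = ((H : ℝ) + 1) * μstar := by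
      unfold Vpath
      rw [Finset.sum_const, Finset.card_range, nsmul_eq_mul, hs]
      push_cast; ring
    rw [← h2]
    exact le_vopt_s10 adj μ μstar hmax rfl fun _ _ => hrefl s
  have h3 := hfun_nonneg (Δ := Δ) (D := D) hrefl hmax s
  unfold hfun at h3 ⊢
  rw [← hH] at h3 ⊢
  linarith

lemma hfun_le_D (hrefl : ∀ s, adj s s) (hμ0 : ∀ s, 0 ≤ μ s) (hmax : ∀ s, μ s ≤ μstar)
    (hex : ∃ s, μ s = μstar)
    (hD : ∀ s s' : S, ∃ (n : ℕ) (p : ℕ → S), n ≤ D ∧ p 0 = s ∧ p n = s' ∧ Adm adj p n)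
    (hDG : D ≤ TG D μstar Δ) (s : S) :
    hfun adj μ μstar Δ D s ≤ (D : ℝ) * μstar := by
  obtain ⟨sstar, hsstar⟩ := hex
  obtain ⟨n, r, hnD, hr0, hrn, hradm⟩ := hD s sstar
  set H := TG D μstar Δ + Fintype.card S with hH
  have hnH : n ≤ H := le_trans (hnD.trans hDG) (Nat.le_add_right _ _)
  have hq0 : stopAt r n 0 = s := by simp [stopAt, hr0]
  have hqadm : Adm adj (stopAt r n) H := stopAt_adm hrefl hradm H
  have h1 := hfun_le_cost (Δ := Δ) (D := D) hmax hq0 hqadm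
  rw [cost_stopAt μ μstar (by rw [hrn, hsstar]) (hnH.trans (Nat.le_succ H))] at h1
  have h2 : Cost μ μstar r n ≤ (n : ℝ) * μstar := by
    calc Cost μ μstar r n ≤ ∑ _t ∈ Finset.range n, μstar :=
          Finset.sum_le_sum fun t _ => by linarith [hμ0 (r t)]
      _ = (n : ℝ) * μstar := by rw [Finset.sum_const, Finset.card_range, nsmul_eq_mul]
  have h3 : (n : ℝ) * μstar ≤ (D : ℝ) * μstar := by
    have h0 : 0 ≤ μstar := le_trans (hμ0 sstar) (hmax sstar)
    exact mul_le_mul_of_nonneg_right (by exact_mod_cast hnD) h0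
  linarith

/-- Key lemma: any admissible path of length at least `T_G` has total cost at least `hfun`. -/
lemma hfun_key (hrefl : ∀ s, adj s s) (hμ0 : ∀ s, 0 ≤ μ s) (hmax : ∀ s, μ s ≤ μstar)
    (hex : ∃ s, μ s = μstar) (hΔ : 0 < Δ) (hgap : ∀ s, μ s < μstar → μ s ≤ μstar - Δ)
    (hD : ∀ s s' : S, ∃ (n : ℕ) (p : ℕ → S), n ≤ D ∧ p 0 = s ∧ p n = s' ∧ Adm adj p n)
    (hDG : D ≤ TG D μstar Δ) (hDmu : (D : ℝ) * μstar ≤ (TG D μstar Δ : ℝ) * Δ)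
    {s : S} {m : ℕ} (hm : TG D μstar Δ ≤ m) {p : ℕ → S} (hp0 : p 0 = s)
    (hadm : Adm adj p m) :
    hfun adj μ μstar Δ D s ≤ Cost μ μstar p (m + 1) := by
  set G := TG D μstar Δ with hG
  set H := G + Fintype.card S with hH
  by_cases hvis : ∃ k, k ≤ G ∧ μ (p k) = μstar
  · obtain ⟨k, hkG, hkopt⟩ := hvis
    have hkH : k ≤ H := hkG.trans (Nat.le_add_right _ _)
    have hadmk : Adm adj p k := fun t ht => hadm t (lt_of_lt_of_le ht (hkG.trans hm))
    have hq0 : stopAt p k 0 = s := by simp [stopAt, hp0]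
    have hqadm : Adm adj (stopAt p k) H := stopAt_adm hrefl hadmk H
    have h1 := hfun_le_cost (Δ := Δ) (D := D) hmax hq0 hqadm
    rw [cost_stopAt μ μstar hkopt (hkH.trans (Nat.le_succ H))] at h1
    exact h1.trans (cost_mono μ μstar hmax p (hkG.trans (hm.trans (Nat.le_succ m))))
  · push_neg at hvis
    have hsub : ∀ k ≤ G, μstar - μ (p k) ≥ Δ := by
      intro k hk
      have h1 : μ (p k) < μstar := lt_of_le_of_ne (hmax _) (hvis k hk)
      linarith [hgap _ h1]
    have h2 : ((G : ℝ) + 1) * Δ ≤ Cost μ μstar p (G + 1) := by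
      calc ((G : ℝ) + 1) * Δ = ∑ _t ∈ Finset.range (G + 1), Δ := by
            rw [Finset.sum_const, Finset.card_range, nsmul_eq_mul]; push_cast; ring
        _ ≤ Cost μ μstar p (G + 1) :=
            Finset.sum_le_sum fun t ht => hsub t (Nat.lt_succ_iff.1 (Finset.mem_range.1 ht))
    have h3 := cost_mono μ μstar hmax p (Nat.succ_le_succ hm)
    have h4 := hfun_le_D (Δ := Δ) hrefl hμ0 hmax hex hD hDG s
    have h5 : (D : ℝ) * μstar < ((G : ℝ) + 1) * Δ := by nlinarith
    linarith

/-- Greedy step lemma: if `w'` minimizes `hfun` over the neighbors of `s`, then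
`hfun w' ≤ hfun s - (μstar - μ s)`. -/
lemma hfun_step (hrefl : ∀ s, adj s s) (hμ0 : ∀ s, 0 ≤ μ s) (hmax : ∀ s, μ s ≤ μstar)
    (hex : ∃ s, μ s = μstar) (hΔ : 0 < Δ) (hgap : ∀ s, μ s < μstar → μ s ≤ μstar - Δ)
    (hD : ∀ s s' : S, ∃ (n : ℕ) (p : ℕ → S), n ≤ D ∧ p 0 = s ∧ p n = s' ∧ Adm adj p n)
    (hDG : D ≤ TG D μstar Δ) (hDmu : (D : ℝ) * μstar ≤ (TG D μstar Δ : ℝ) * Δ)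
    (s w' : S) (hg : ∀ w, adj s w → hfun adj μ μstar Δ D w' ≤ hfun adj μ μstar Δ D w) :
    hfun adj μ μstar Δ D w' ≤ hfun adj μ μstar Δ D s - (μstar - μ s) := by
  set G := TG D μstar Δ with hG
  set H := G + Fintype.card S with hH
  have hcard : 1 ≤ Fintype.card S := Fintype.card_pos
  have hH1 : 1 ≤ H := le_trans hcard (Nat.le_add_left _ _)
  obtain ⟨q, hq0, hqadm, hqval⟩ := exists_opt adj hrefl μ s H
  have hhs : hfun adj μ μstar Δ D s = Cost μ μstar q (H + 1) := by
    unfold hfun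
    rw [← hG, ← hH, ← hqval, vpath_eq_cost μ μstar]
    ring
  have hsplit : Cost μ μstar q (H + 1)
      = (∑ t ∈ Finset.range H, (μstar - μ (q (t + 1)))) + (μstar - μ (q 0)) :=
    Finset.sum_range_succ' (fun t => μstar - μ (q t)) H
  set r : ℕ → S := fun t => q (t + 1) with hr
  have hradm : Adm adj r (H - 1) := by
    intro t ht
    exact hqadm (t + 1) (by omega)
  have hGm : G ≤ H - 1 := by omega
  have hkey := hfun_key hrefl hμ0 hmax hex hΔ hgap hD hDG hDmu hGm rfl hradm
  have hHm1 : H - 1 + 1 = H := by omega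
  rw [hHm1] at hkey
  have hadj1 : adj s (q 1) := hq0 ▸ hqadm 0 (by omega)
  have hg1 := hg (q 1) hadj1
  have hcostr : Cost μ μstar r H = ∑ t ∈ Finset.range H, (μstar - μ (q (t + 1))) := rfl
  rw [hq0] at hsplit
  have : hfun adj μ μstar Δ D (q 1) ≤ hfun adj μ μstar Δ D s - (μstar - μ s) := by
    rw [hhs, hsplit]
    have : hfun adj μ μstar Δ D (r 0) ≤ Cost μ μstar r H := hkey
    simp only [hr] at this
    rw [hcostr] at hkey
    linarith [hkey]
  linarith [hg1]

end Aux

/-- Greedy stationary policy optimality: for `T ≥ T_G + |S|`, every path which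
at each step moves to a neighbor maximizing `V(·, T_G + |S|)` achieves the
optimal value `V(s0, T)`. -/
theorem greedy_policy_optimal {S : Type*} [Fintype S] [Nonempty S]
    (adj : S → S → Prop) (hrefl : ∀ s, adj s s) (hsymm : ∀ s t, adj s t → adj t s)
    (μ : S → ℝ) (hμ0 : ∀ s, 0 ≤ μ s)
    (μstar : ℝ) (hmax : ∀ s, μ s ≤ μstar) (hex : ∃ s, μ s = μstar)
    (Δ : ℝ) (hΔ : 0 < Δ) (hgap : ∀ s, μ s < μstar → μ s ≤ μstar - Δ)
    (D : ℕ)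
    (hD : ∀ s s' : S, ∃ (T : ℕ) (p : ℕ → S),
      T ≤ D ∧ p 0 = s ∧ p T = s' ∧ Adm adj p T)
    (T : ℕ) (hT : TG D μstar Δ + Fintype.card S ≤ T)
    (s0 : S) (p : ℕ → S) (hp0 : p 0 = s0)
    (hgreedy : ∀ t < T, adj (p t) (p (t + 1)) ∧
      ∀ w, adj (p t) w →
        Vopt adj μ w (TG D μstar Δ + Fintype.card S) ≤
          Vopt adj μ (p (t + 1)) (TG D μstar Δ + Fintype.card S)) :
    Vpath μ p T = Vopt adj μ s0 T := by
  classical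
  by_cases hall : ∀ s : S, μ s = μstar
  · -- Degenerate case: all rewards are optimal.
    have hv : ∀ (q : ℕ → S) (n : ℕ), Vpath μ q n = ((n : ℝ) + 1) * μstar := by
      intro q n
      unfold Vpath
      rw [Finset.sum_congr rfl fun t _ => hall (q t), Finset.sum_const, Finset.card_range,
        nsmul_eq_mul]
      push_cast; ring
    have hle : Vopt adj μ s0 T ≤ ((T : ℝ) + 1) * μstar :=
      vopt_le adj hrefl μ fun q _ _ => (hv q T).le
    have hge : ((T : ℝ) + 1) * μstar ≤ Vopt adj μ s0 T := by
      rw [← hv (fun _ => s0) T]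
      exact le_vopt_s10 adj μ μstar hmax rfl fun _ _ => hrefl s0
    rw [hv p T]
    linarith
  · push_neg at hall
    obtain ⟨sbad, hsbad⟩ := hall
    have hsbad' : μ sbad < μstar := lt_of_le_of_ne (hmax sbad) hsbad
    have hμΔ : Δ ≤ μstar := by linarith [hgap sbad hsbad', hμ0 sbad]
    have hμstar0 : 0 < μstar := lt_of_lt_of_le hΔ hμΔ
    have hceil := Nat.le_ceil ((D : ℝ) * μstar / Δ)
    have hDmu : (D : ℝ) * μstar ≤ (TG D μstar Δ : ℝ) * Δ := by
      rw [div_le_iff₀ hΔ] at hceil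
      exact hceil
    have hDG : D ≤ TG D μstar Δ := by
      have h1 : (D : ℝ) ≤ (TG D μstar Δ : ℝ) := by
        rcases Nat.eq_zero_or_pos D with hD0 | hD0
        · simp [hD0]
        · have hDpos : (0 : ℝ) < (D : ℝ) := by exact_mod_cast hD0
          have h2 : (D : ℝ) * Δ ≤ (D : ℝ) * μstar := by nlinarith
          nlinarith
      exact_mod_cast h1
    have hcard : 1 ≤ Fintype.card S := Fintype.card_pos
    have hGT : TG D μstar Δ ≤ T := le_trans (Nat.le_add_right _ _) hT
    have hadm : Adm adj p T := fun t ht => (hgreedy t ht).1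
    -- greedy steps decrease hfun by the local gap
    have hstep : ∀ t < T, hfun adj μ μstar Δ D (p (t + 1))
        ≤ hfun adj μ μstar Δ D (p t) - (μstar - μ (p t)) := by
      intro t ht
      refine hfun_step hrefl hμ0 hmax hex hΔ hgap hD hDG hDmu (p t) (p (t + 1)) ?_
      intro w hw
      have h1 := (hgreedy t ht).2 w hw
      unfold hfun
      linarith
    -- telescoping cost bound
    have hA : ∀ t, t ≤ T → Cost μ μstar p t + hfun adj μ μstar Δ D (p t)
        ≤ hfun adj μ μstar Δ D s0 := by
      intro t
      induction t with
      | zero => intro _; simp [Cost, hp0]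
      | succ t ih =>
        intro h
        have h1 := ih (le_of_lt (Nat.lt_of_succ_le h))
        have h2 := hstep t (Nat.lt_of_succ_le h)
        have h3 : Cost μ μstar p (t + 1) = Cost μ μstar p t + (μstar - μ (p t)) :=
          Finset.sum_range_succ _ t
        rw [h3]
        linarith
    -- hfun vanishes after TG steps
    have hB : ∀ t, t ≤ T → hfun adj μ μstar Δ D (p t)
        ≤ max 0 (hfun adj μ μstar Δ D s0 - (t : ℝ) * Δ) := by
      intro t
      induction t with
      | zero =>
        intro _
        rw [hp0]
        simp only [Nat.cast_zero, zero_mul, sub_zero]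
        exact le_max_of_le_right le_rfl
      | succ t ih =>
        intro h
        have h1 := ih (le_of_lt (Nat.lt_of_succ_le h))
        have h2 := hstep t (Nat.lt_of_succ_le h)
        have hnn := hfun_nonneg (adj := adj) (μ := μ) (Δ := Δ) (D := D) hrefl hmax (p (t + 1))
        by_cases hopt : μ (p t) = μstar
        · have h3 := hfun_eq_zero (Δ := Δ) (D := D) hrefl hmax hopt
          have : hfun adj μ μstar Δ D (p (t + 1)) ≤ 0 := by
            rw [h3] at h2; rw [hopt] at h2; linarith
          exact le_max_of_le_left (by linarith)
        · have hlt : μ (p t) < μstar := lt_of_le_of_ne (hmax _) hopt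
          have hgapt : Δ ≤ μstar - μ (p t) := by linarith [hgap _ hlt]
          by_cases hc : hfun adj μ μstar Δ D s0 - (t : ℝ) * Δ ≤ 0
          · exfalso
            have h4 : hfun adj μ μstar Δ D (p t) ≤ 0 := le_trans h1 (max_le le_rfl hc)
            have h5 : hfun adj μ μstar Δ D (p (t + 1)) ≤ -Δ := by linarith
            linarith
          · push_neg at hc
            have h4 : max 0 (hfun adj μ μstar Δ D s0 - (t : ℝ) * Δ)
                = hfun adj μ μstar Δ D s0 - (t : ℝ) * Δ := max_eq_right hc.le
            refine le_max_of_le_right ?_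
            rw [h4] at h1
            push_cast
            linarith
    have hzero : ∀ t, TG D μstar Δ ≤ t → t ≤ T → hfun adj μ μstar Δ D (p t) = 0 := by
      intro t h1 h2
      have hb := hB t h2
      have hhD := hfun_le_D (Δ := Δ) hrefl hμ0 hmax hex hD hDG s0
      have h3 : (TG D μstar Δ : ℝ) * Δ ≤ (t : ℝ) * Δ :=
        mul_le_mul_of_nonneg_right (by exact_mod_cast h1) hΔ.le
      have h4 : hfun adj μ μstar Δ D s0 - (t : ℝ) * Δ ≤ 0 := by linarith
      have h5 := hfun_nonneg (adj := adj) (μ := μ) (Δ := Δ) (D := D) hrefl hmax (p t)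
      have h6 : max 0 (hfun adj μ μstar Δ D s0 - (t : ℝ) * Δ) = 0 := max_eq_left h4
      rw [h6] at hb
      linarith
    have hTend : hfun adj μ μstar Δ D (p T) = 0 := hzero T hGT le_rfl
    have hμT : μ (p T) = μstar := by
      have h1 := gap_le_hfun (Δ := Δ) (D := D) hrefl hmax (p T)
      have h2 := hmax (p T)
      rw [hTend] at h1
      linarith
    have hcostT : Cost μ μstar p (T + 1) ≤ hfun adj μ μstar Δ D s0 := by
      have h1 := hA T le_rfl
      have h2 : Cost μ μstar p (T + 1) = Cost μ μstar p T + (μstar - μ (p T)) :=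
        Finset.sum_range_succ _ T
      rw [h2, hμT]
      linarith
    apply le_antisymm
    · exact le_vopt_s10 adj μ μstar hmax hp0 hadm
    · have h1 : Vopt adj μ s0 T ≤ ((T : ℝ) + 1) * μstar - hfun adj μ μstar Δ D s0 := by
        refine vopt_le adj hrefl μ fun q hq0 hqadm => ?_
        have h2 := hfun_key hrefl hμ0 hmax hex hΔ hgap hD hDG hDmu hGT hq0 hqadm
        rw [vpath_eq_cost μ μstar]
        linarith
      rw [vpath_eq_cost μ μstar p T]
      linarith
end
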